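/- Let (R,δ) be an m₁-inverse loop with permutation J_R fixing δ and with J_R^{h₁} ∈ Aut(R), and (S,δ) an m₂-inverse loop with permutation J_S fixing δ and J_S^{h₂} ∈ Aut(S). Suppose φ: S×R → R satisfies φ(δ,r)=r, φ(s,δ)=δ, φ(J_S^m(ss'), φ(J_S^{m+1}(s),r)) = φ(J_S^m(s'),r), and φ(s,J_R^m(rr'))·φ(s,J_R^{m+1}(r)) = φ(s,J_R^m(r')) for an integer m with m ≡ m₁ (mod h₁) and m ≡ m₂ (mod h₂). If m is odd and moreover φ(J_S^m(ss'), φ(s,r)) = φ(J_S^m(s'),r) for all s,s' ∈ S, r ∈ R, then R×S with multiplication (r,s)(r',s') = (r·φ(s,r'), ss'), identity (δ,δ), and permutation J(r,s) = (φ(J_S(s),J_R(r)), J_S(s)) is an m-inverse loop. -/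

import Mathlib

theorem Equiv.Perm.apply_inv_self {α : Type*} (f : Equiv.Perm α) (x : α) : f (f⁻¹ x) = x :=
  f.apply_symm_apply x

theorem Equiv.Perm.inv_apply_self {α : Type*} (f : Equiv.Perm α) (x : α) : f⁻¹ (f x) = x :=
  f.symm_apply_apply x

private lemma aux_fix {α : Type*} (J : Equiv.Perm α) (δ : α) (h : J δ = δ) :
    ∀ k : ℤ, (J ^ k) δ = δ := by
  have h' : J⁻¹ δ = δ := by
    calc J⁻¹ δ = J⁻¹ (J δ) := by rw [h]
    _ = δ := Equiv.Perm.inv_apply_self J δ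
  intro k
  induction k using Int.induction_on with
  | zero => simp
  | succ n ih => rw [zpow_add, zpow_one, Equiv.Perm.mul_apply, h, ih]
  | pred n ih => rw [zpow_sub, zpow_one, Equiv.Perm.mul_apply, h', ih]

private lemma aux_invaut {α : Type*} [Mul α] (J : Equiv.Perm α) (h : ℤ)
    (ha : ∀ a b, (J ^ h) (a * b) = (J ^ h) a * (J ^ h) b) :
    ∀ a b, (J ^ (-h)) (a * b) = (J ^ (-h)) a * (J ^ (-h)) b := by
  intro a b
  rw [zpow_neg]
  apply (J ^ h).injective
  rw [Equiv.Perm.apply_inv_self, ha, Equiv.Perm.apply_inv_self, Equiv.Perm.apply_inv_self]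

private lemma aux_autz {α : Type*} [Mul α] (J : Equiv.Perm α) (h : ℤ)
    (ha : ∀ a b, (J ^ h) (a * b) = (J ^ h) a * (J ^ h) b) :
    ∀ (t : ℤ) (a b : α), (J ^ (h * t)) (a * b) = (J ^ (h * t)) a * (J ^ (h * t)) b := by
  intro t
  induction t using Int.induction_on with
  | zero => simp
  | succ n ih =>
      intro a b
      have e : h * (↑n + 1) = h * ↑n + h := by ring
      rw [e, zpow_add, Equiv.Perm.mul_apply, ha, ih, Equiv.Perm.mul_apply,
        Equiv.Perm.mul_apply]
  | pred n ih =>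
      intro a b
      have e : h * (-↑n - 1) = h * (-↑n) + (-h) := by ring
      rw [e, zpow_add, Equiv.Perm.mul_apply, aux_invaut J h ha, ih,
        Equiv.Perm.mul_apply, Equiv.Perm.mul_apply]

private lemma aux_minv {α : Type*} [Mul α] (J : Equiv.Perm α) (m₁ h₁ m : ℤ)
    (hm : ∀ x y, (J ^ m₁) (x * y) * (J ^ (m₁ + 1)) x = (J ^ m₁) y)
    (ha : ∀ a b, (J ^ h₁) (a * b) = (J ^ h₁) a * (J ^ h₁) b)
    (hc : m ≡ m₁ [ZMOD h₁]) :
    ∀ x y, (J ^ m) (x * y) * (J ^ (m + 1)) x = (J ^ m) y := by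
  obtain ⟨k, hk⟩ := hc.dvd
  intro x y
  have h2 := congrArg (⇑(J ^ (h₁ * (-k)))) (hm x y)
  rw [aux_autz J h₁ ha (-k)] at h2
  simp only [← Equiv.Perm.mul_apply, ← zpow_add] at h2
  have e : h₁ * (-k) + m₁ = m := by rw [mul_neg]; linarith
  have e2 : h₁ * (-k) + (m₁ + 1) = m + 1 := by rw [mul_neg]; linarith
  rw [e, e2] at h2
  exact h2

private def auxProdHom (α β : Type*) : Equiv.Perm α × Equiv.Perm β →* Equiv.Perm (α × β) where
  toFun p := Equiv.prodCongr p.1 p.2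
  map_one' := by apply Equiv.ext; rintro ⟨a, b⟩; rfl
  map_mul' f g := by apply Equiv.ext; rintro ⟨a, b⟩; rfl

theorem stmt_11 {R S : Type*} [Mul R] [Mul S] (δR : R) (δS : S)
    (hqR₁ : ∀ a b : R, ∃! x : R, a * x = b)
    (hqR₂ : ∀ a b : R, ∃! y : R, y * a = b)
    (hqS₁ : ∀ a b : S, ∃! x : S, a * x = b)
    (hqS₂ : ∀ a b : S, ∃! y : S, y * a = b)
    (hδR : ∀ r : R, δR * r = r ∧ r * δR = r)
    (hδS : ∀ s : S, δS * s = s ∧ s * δS = s)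
    (JR : Equiv.Perm R) (JS : Equiv.Perm S)
    (hJRδ : JR δR = δR) (hJSδ : JS δS = δS)
    (hinvR : ∀ r : R, r * JR r = δR) (hinvS : ∀ s : S, s * JS s = δS)
    (m₁ m₂ h₁ h₂ m : ℤ)
    (hmR : ∀ x y : R, (JR ^ m₁) (x * y) * (JR ^ (m₁ + 1)) x = (JR ^ m₁) y)
    (hmS : ∀ x y : S, (JS ^ m₂) (x * y) * (JS ^ (m₂ + 1)) x = (JS ^ m₂) y)
    (haR : ∀ x y : R, (JR ^ h₁) (x * y) = (JR ^ h₁) x * (JR ^ h₁) y)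
    (haS : ∀ x y : S, (JS ^ h₂) (x * y) = (JS ^ h₂) x * (JS ^ h₂) y)
    (hc₁ : m ≡ m₁ [ZMOD h₁]) (hc₂ : m ≡ m₂ [ZMOD h₂])
    (φ : S → R → R)
    (hφδ : ∀ r : R, φ δS r = r) (hφδ' : ∀ s : S, φ s δR = δR)
    (hφ1 : ∀ (s s' : S) (r : R),
      φ ((JS ^ m) (s * s')) (φ ((JS ^ (m + 1)) s) r) = φ ((JS ^ m) s') r)
    (hφ2 : ∀ (s : S) (r r' : R),
      φ s ((JR ^ m) (r * r')) * φ s ((JR ^ (m + 1)) r) = φ s ((JR ^ m) r'))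
    (hodd : Odd m)
    (hφ3 : ∀ (s s' : S) (r : R),
      φ ((JS ^ m) (s * s')) (φ s r) = φ ((JS ^ m) s') r) :
    let mul : R × S → R × S → R × S :=
      fun p q => (p.1 * φ p.2 q.1, p.2 * q.2)
    ∃ J : Equiv.Perm (R × S),
      (∀ p : R × S, J p = (φ (JS p.2) (JR p.1), JS p.2)) ∧
      ((∀ a b : R × S, ∃! x : R × S, mul a x = b) ∧
       (∀ a b : R × S, ∃! y : R × S, mul y a = b)) ∧
      (∀ p : R × S, mul (δR, δS) p = p ∧ mul p (δR, δS) = p) ∧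
      (∀ p : R × S, mul p (J p) = (δR, δS)) ∧
      (∀ p q : R × S, mul ((J ^ m) (mul p q)) ((J ^ (m + 1)) p) = (J ^ m) q) := by
  intro mul
  -- composition-of-powers helpers
  have hzR : ∀ (a b : ℤ) (x : R), (JR ^ a) ((JR ^ b) x) = (JR ^ (a + b)) x := by
    intro a b x; rw [← Equiv.Perm.mul_apply, ← zpow_add]
  have hzS : ∀ (a b : ℤ) (x : S), (JS ^ a) ((JS ^ b) x) = (JS ^ (a + b)) x := by
    intro a b x; rw [← Equiv.Perm.mul_apply, ← zpow_add]
  have hone : ∀ s : S, JS s = (JS ^ (1 : ℤ)) s := by intro s; rw [zpow_one]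
  have honeR : ∀ r : R, JR r = (JR ^ (1 : ℤ)) r := by intro r; rw [zpow_one]
  -- transferred m-inverse properties
  have hmRm := aux_minv JR m₁ h₁ m hmR haR hc₁
  have hmSm := aux_minv JS m₂ h₂ m hmS haS hc₂
  -- L0 : left inverse of φ s
  have L0 : ∀ (s : S) (r : R), φ ((JS ^ m) s) (φ s r) = r := by
    intro s r
    have h := hφ3 s δS r
    rw [(hδS s).2, aux_fix JS δS hJSδ m, hφδ] at h
    exact h
  have hinj : ∀ s : S, Function.Injective (φ s) := by
    intro s a b h
    have := congrArg (φ ((JS ^ m) s)) h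
    rwa [L0, L0] at this
  -- L1 : φ (JS^(m+1) s) = φ s
  have L1 : ∀ (s : S) (r : R), φ ((JS ^ (m + 1)) s) r = φ s r := by
    intro s r
    have h := hφ1 s δS r
    rw [(hδS s).2, aux_fix JS δS hJSδ m, hφδ] at h
    apply hinj ((JS ^ m) s)
    rw [h, L0]
  -- P2 : φ s ∘ φ (JS s) = id
  have P2 : ∀ (s : S) (r : R), φ s (φ (JS s) r) = r := by
    intro s r
    have h := L0 (JS s) r
    rw [hone s, hzS] at h
    rwa [L1] at h
  -- P1 : φ (JS s) ∘ φ s = id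
  have P1 : ∀ (s : S) (r : R), φ (JS s) (φ s r) = r := by
    intro s r
    apply hinj s
    exact P2 s (φ s r)
  -- L2 : period 2
  have L2 : ∀ (s : S) (r : R), φ (JS (JS s)) r = φ s r := by
    intro s r
    conv_lhs => rw [← P1 s r]
    rw [P1 (JS s)]
  have L2even : ∀ (t : ℤ) (u : S) (x : R), φ ((JS ^ (2 * t)) u) x = φ u x := by
    have h2 : ∀ u : S, (JS ^ (2 : ℤ)) u = JS (JS u) := by
      intro u
      rw [show (2 : ℤ) = 1 + 1 from rfl, zpow_add, zpow_one, Equiv.Perm.mul_apply]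
    have h2' : ∀ u : S, JS (JS ((JS ^ (-2 : ℤ)) u)) = u := by
      intro u
      rw [← h2, hzS]; norm_num
    intro t
    induction t using Int.induction_on with
    | zero => intro u x; norm_num
    | succ n ih =>
        intro u x
        have e : 2 * ((n : ℤ) + 1) = 2 * (n : ℤ) + 2 := by ring
        rw [e, ← hzS, ih (((JS ^ (2 : ℤ))) u), h2, L2]
    | pred n ih =>
        intro u x
        have e : 2 * (-(n : ℤ) - 1) = 2 * (-(n : ℤ)) + (-2) := by ring
        have key : φ ((JS ^ (-2 : ℤ)) u) x = φ u x := by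
          have := L2 ((JS ^ (-2 : ℤ)) u) x
          rw [h2'] at this
          exact this.symm
        rw [e, ← hzS, ih (((JS ^ (-2 : ℤ))) u), key]
  obtain ⟨t, ht⟩ := hodd
  have Lodd : ∀ (u : S) (x : R), φ ((JS ^ m) u) x = φ (JS u) x := by
    intro u x
    rw [ht, ← hzS, ← hone, L2even]
  -- Hhom : φ s is multiplicative
  have Hhom : ∀ (s : S) (a b : R), φ s (a * b) = φ s a * φ s b := by
    intro s a b
    obtain ⟨r', hr', -⟩ := hqR₁ ((JR ^ (-(m + 1))) b) ((JR ^ (-m)) a)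
    have ez1 : m + -m = 0 := by ring
    have ez2 : m + 1 + -(m + 1) = 0 := by ring
    have h2 := hmRm ((JR ^ (-(m + 1))) b) r'
    rw [hr', hzR, hzR, ez1, ez2] at h2
    simp only [zpow_zero, Equiv.Perm.one_apply] at h2
    have h4 := hφ2 s ((JR ^ (-(m + 1))) b) r'
    rw [hr', hzR, hzR, ez1, ez2] at h4
    simp only [zpow_zero, Equiv.Perm.one_apply] at h4
    rw [← h2] at h4
    exact h4.symm
  -- M : φ is multiplicative in the first argument
  have M : ∀ (a b : S) (r : R), φ (a * b) r = φ a (φ b r) := by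
    intro a b r
    obtain ⟨s', hs', -⟩ := hqS₁ ((JS ^ (-(m + 1))) b) ((JS ^ (-m)) a)
    have ez1 : m + -m = 0 := by ring
    have ez2 : m + 1 + -(m + 1) = 0 := by ring
    have h2 := hmSm ((JS ^ (-(m + 1))) b) s'
    rw [hs', hzS, hzS, ez1, ez2] at h2
    simp only [zpow_zero, Equiv.Perm.one_apply] at h2
    have h4 := hφ1 ((JS ^ (-(m + 1))) b) s' r
    rw [hs', hzS, hzS, ez1, ez2] at h4
    simp only [zpow_zero, Equiv.Perm.one_apply] at h4
    rw [← h2] at h4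
    exact h4.symm
  -- C : φ s commutes with JR
  have C : ∀ (s : S) (r : R), φ s (JR r) = JR (φ s r) := by
    intro s r
    have e1 : φ s r * φ s (JR r) = δR := by rw [← Hhom, hinvR, hφδ']
    have e2 : φ s r * JR (φ s r) = δR := hinvR _
    exact (hqR₁ (φ s r) δR).unique e1 e2
  have Cinv : ∀ (s : S) (r : R), φ s (JR⁻¹ r) = JR⁻¹ (φ s r) := by
    intro s r
    apply JR.injective
    rw [← C, Equiv.Perm.apply_inv_self JR, Equiv.Perm.apply_inv_self JR]
  have Cz : ∀ (k : ℤ) (s : S) (r : R), φ s ((JR ^ k) r) = (JR ^ k) (φ s r) := by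
    intro k
    induction k using Int.induction_on with
    | zero => intro s r; norm_num
    | succ n ih =>
        intro s r
        have e : (n : ℤ) + 1 = 1 + (n : ℤ) := by ring
        rw [e, ← hzR, ← honeR, C, ih, honeR, hzR]
    | pred n ih =>
        intro s r
        have e : -(n : ℤ) - 1 = (-1) + (-(n : ℤ)) := by ring
        have hm1 : ∀ x : R, (JR ^ (-1 : ℤ)) x = JR⁻¹ x := by
          intro x; rw [zpow_neg, zpow_one]
        rw [e, ← hzR, hm1, Cinv, ih, ← hm1, hzR]
  -- the permutation J
  let Jp : Equiv.Perm (R × S) :=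
    ⟨fun p => (φ (JS p.2) (JR p.1), JS p.2),
     fun q => (JR⁻¹ (φ (JS⁻¹ q.2) q.1), JS⁻¹ q.2), by
       rintro ⟨r, s⟩
       show (JR⁻¹ (φ (JS⁻¹ (JS s)) (φ (JS s) (JR r))), JS⁻¹ (JS s)) = (r, s)
       rw [Equiv.Perm.inv_apply_self JS, P2, Equiv.Perm.inv_apply_self JR], by
       rintro ⟨r', s'⟩
       show (φ (JS (JS⁻¹ s')) (JR (JR⁻¹ (φ (JS⁻¹ s') r'))), JS (JS⁻¹ s')) = (r', s')
       have h := P1 (JS⁻¹ s') r'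
       rw [Equiv.Perm.apply_inv_self JS] at h
       rw [Equiv.Perm.apply_inv_self JS, Equiv.Perm.apply_inv_self JR, h]⟩
  refine ⟨Jp, fun p => rfl, ?_, ?_, ?_, ?_⟩
  · -- quasigroup
    constructor
    · intro a b
      obtain ⟨x₂, hx₂, hx₂u⟩ := hqS₁ a.2 b.2
      obtain ⟨c, hc, hcu⟩ := hqR₁ a.1 b.1
      refine ⟨(φ (JS a.2) c, x₂), ?_, ?_⟩
      · show (a.1 * φ a.2 (φ (JS a.2) c), a.2 * x₂) = b
        rw [P2, hc, hx₂]
      · rintro ⟨y₁, y₂⟩ hy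
        have h1 : a.1 * φ a.2 y₁ = b.1 := congrArg Prod.fst hy
        have h2 : a.2 * y₂ = b.2 := congrArg Prod.snd hy
        have e2 : y₂ = x₂ := hx₂u y₂ h2
        have e0 : φ a.2 y₁ = c := hcu _ h1
        have e1 : y₁ = φ (JS a.2) c := by rw [← e0, P1]
        rw [e1, e2]
    · intro a b
      obtain ⟨y₂, hy₂, hy₂u⟩ := hqS₂ a.2 b.2
      obtain ⟨y₁, hy₁, hy₁u⟩ := hqR₂ (φ y₂ a.1) b.1
      refine ⟨(y₁, y₂), ?_, ?_⟩
      · show (y₁ * φ y₂ a.1, y₂ * a.2) = b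
        rw [hy₁, hy₂]
      · rintro ⟨z₁, z₂⟩ hz
        have h1 : z₁ * φ z₂ a.1 = b.1 := congrArg Prod.fst hz
        have h2 : z₂ * a.2 = b.2 := congrArg Prod.snd hz
        have e2 : z₂ = y₂ := hy₂u z₂ h2
        rw [e2] at h1
        have e1 : z₁ = y₁ := hy₁u z₁ h1
        rw [e1, e2]
  · -- identity
    intro p
    constructor
    · show (δR * φ δS p.1, δS * p.2) = p
      rw [hφδ, (hδR p.1).1, (hδS p.2).1]
    · show (p.1 * φ p.2 δR, p.2 * δS) = p
      rw [hφδ', (hδR p.1).2, (hδS p.2).2]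
  · -- inverses
    rintro ⟨r, s⟩
    show (r * φ s (φ (JS s) (JR r)), s * JS s) = (δR, δS)
    rw [P2, hinvR, hinvS]
  · -- the m-inverse property
    have hJ2 : ∀ p : R × S, Jp (Jp p) = (JR (JR p.1), JS (JS p.2)) := by
      rintro ⟨r, s⟩
      show (φ (JS (JS s)) (JR (φ (JS s) (JR r))), JS (JS s)) = (JR (JR r), JS (JS s))
      rw [← C, P1]
    have hJ2eq : Jp * Jp = auxProdHom R S (JR * JR, JS * JS) := by
      apply Equiv.ext
      rintro ⟨r, s⟩
      exact hJ2 (r, s)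
    have hJE : ∀ (k : ℤ) (p : R × S),
        (Jp ^ (2 * k)) p = ((JR ^ (2 * k)) p.1, (JS ^ (2 * k)) p.2) := by
      intro k p
      obtain ⟨r, s⟩ := p
      have h1 : Jp ^ (2 * k) = auxProdHom R S ((JR * JR) ^ k, (JS * JS) ^ k) := by
        rw [zpow_mul, zpow_two, hJ2eq, ← map_zpow]
        rfl
      rw [h1]
      show (((JR * JR) ^ k) r, ((JS * JS) ^ k) s) = _
      rw [show (JR * JR) ^ k = JR ^ (2 * k) from by rw [← zpow_two, ← zpow_mul],
        show (JS * JS) ^ k = JS ^ (2 * k) from by rw [← zpow_two, ← zpow_mul]]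
    have hJm : ∀ p : R × S, (Jp ^ m) p = (φ (JS p.2) ((JR ^ m) p.1), (JS ^ m) p.2) := by
      rintro ⟨r, s⟩
      rw [ht, zpow_add, zpow_one, Equiv.Perm.mul_apply]
      have hstep : Jp (r, s) = (φ (JS s) (JR r), JS s) := rfl
      rw [hstep, hJE]
      show ((JR ^ (2 * t)) (φ (JS s) (JR r)), (JS ^ (2 * t)) (JS s)) = _
      rw [← Cz, show (JR ^ (2 * t)) (JR r) = (JR ^ (2 * t + 1)) r from by rw [honeR r, hzR],
        show (JS ^ (2 * t)) (JS s) = (JS ^ (2 * t + 1)) s from by rw [hone s, hzS]]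
    have hJm1 : ∀ p : R × S, (Jp ^ (m + 1)) p = ((JR ^ (m + 1)) p.1, (JS ^ (m + 1)) p.2) := by
      intro p
      have e : m + 1 = 2 * (t + 1) := by rw [ht]; ring
      rw [e]
      exact hJE (t + 1) p
    have Lkey : ∀ (s s' : S) (x : R), φ (JS (s * s')) (φ s x) = φ (JS s') x := by
      intro s s' x
      conv_lhs => rw [← P2 s' x]
      rw [← M s s', P1]
    rintro ⟨r, s⟩ ⟨r', s'⟩
    have hmul1 : mul (r, s) (r', s') = (r * φ s r', s * s') := rfl
    rw [hmul1, hJm, hJm1, hJm]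
    show (φ (JS (s * s')) ((JR ^ m) (r * φ s r')) * φ ((JS ^ m) (s * s')) ((JR ^ (m + 1)) r),
        (JS ^ m) (s * s') * (JS ^ (m + 1)) s) = (φ (JS s') ((JR ^ m) r'), (JS ^ m) s')
    refine Prod.ext ?_ ?_
    · show φ (JS (s * s')) ((JR ^ m) (r * φ s r')) * φ ((JS ^ m) (s * s')) ((JR ^ (m + 1)) r)
        = φ (JS s') ((JR ^ m) r')
      rw [Lodd, ← Hhom, hmRm r (φ s r'), ← Cz, Lkey]
    · exact hmSm s s'
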